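/- arXiv:1808.01415 — 3 statements merged into one kernel-verified Lean document; each statement's English description precedes it below -/
import Mathlib

section
/- Type II merging with p-norm aggregation, p ≥ 2, is 1-Lipschitz in a summed sense: if z(x) = (Σ_{k=1}^K |σ_k(y_k(x))|^p)^{1/p} and z̃ is defined analogously from ỹ_k, with each σ_k 1-Lipschitz, then ‖z − z̃‖₂² ≤ Σ_{k=1}^K ‖y_k − ỹ_k‖₂². -/
open MeasureTheory Finset

/-- For nonnegative terms and `r ≥ 1`, `∑ b i ^ r ≤ (∑ b i) ^ r`. -/
lemma sum_rpow_le_rpow_sum_aux {ι : Type*} (s : Finset ι) (b : ι → ℝ)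
    (hb : ∀ i ∈ s, 0 ≤ b i) {r : ℝ} (hr : 1 ≤ r) :
    ∑ i ∈ s, b i ^ r ≤ (∑ i ∈ s, b i) ^ r := by
  have hS : 0 ≤ ∑ i ∈ s, b i := Finset.sum_nonneg hb
  calc ∑ i ∈ s, b i ^ r ≤ ∑ i ∈ s, b i * (∑ j ∈ s, b j) ^ (r - 1) := by
        refine Finset.sum_le_sum fun i hi => ?_
        have h1 : b i ≤ ∑ j ∈ s, b j := Finset.single_le_sum hb hi
        calc b i ^ r = b i ^ (1 + (r - 1)) := by ring_nf
          _ = b i * b i ^ (r - 1) := by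
              rw [Real.rpow_add' (hb i hi) (by linarith), Real.rpow_one]
          _ ≤ b i * (∑ j ∈ s, b j) ^ (r - 1) :=
              mul_le_mul_of_nonneg_left
                (Real.rpow_le_rpow (hb i hi) h1 (by linarith)) (hb i hi)
    _ = (∑ i ∈ s, b i) * (∑ j ∈ s, b j) ^ (r - 1) := by rw [← Finset.sum_mul]
    _ = (∑ i ∈ s, b i) ^ r := by
        rw [show (∑ i ∈ s, b i) * (∑ j ∈ s, b j) ^ (r - 1)
            = (∑ i ∈ s, b i) ^ (1:ℝ) * (∑ i ∈ s, b i) ^ (r - 1) by rw [Real.rpow_one],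
          ← Real.rpow_add' hS (ne_of_gt (by linarith))]
        norm_num

/-- Monotonicity of ℓ^p norms: for `p ≥ 2` and nonnegative `a`,
`(∑ a i ^ p) ^ (1/p) ≤ (∑ a i ^ 2) ^ (1/2)`. -/
lemma lp_le_l2_aux {ι : Type*} (s : Finset ι) (a : ι → ℝ)
    (ha : ∀ i ∈ s, 0 ≤ a i) {p : ℝ} (hp : 2 ≤ p) :
    (∑ i ∈ s, a i ^ p) ^ (1 / p) ≤ (∑ i ∈ s, a i ^ (2:ℝ)) ^ (1 / 2 : ℝ) := by
  have hp0 : 0 < p := by linarith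
  have key : ∑ i ∈ s, a i ^ p ≤ (∑ i ∈ s, a i ^ (2:ℝ)) ^ (p / 2) := by
    have h := sum_rpow_le_rpow_sum_aux s (fun i => a i ^ (2:ℝ))
      (fun i hi => Real.rpow_nonneg (ha i hi) 2) (r := p / 2) (by linarith)
    calc ∑ i ∈ s, a i ^ p = ∑ i ∈ s, (a i ^ (2:ℝ)) ^ (p / 2) := by
          refine Finset.sum_congr rfl fun i hi => ?_
          rw [← Real.rpow_mul (ha i hi)]
          congr 1
          ring
      _ ≤ (∑ i ∈ s, a i ^ (2:ℝ)) ^ (p / 2) := h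
  have h2 : 0 ≤ ∑ i ∈ s, a i ^ (2:ℝ) :=
    Finset.sum_nonneg fun i hi => Real.rpow_nonneg (ha i hi) 2
  calc (∑ i ∈ s, a i ^ p) ^ (1 / p)
      ≤ ((∑ i ∈ s, a i ^ (2:ℝ)) ^ (p / 2)) ^ (1 / p) :=
        Real.rpow_le_rpow (Finset.sum_nonneg fun i hi => Real.rpow_nonneg (ha i hi) p)
          key (by positivity)
    _ = (∑ i ∈ s, a i ^ (2:ℝ)) ^ (1 / 2 : ℝ) := by
        rw [← Real.rpow_mul h2]
        congr 1
        field_simp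

/-- Reverse triangle inequality for the discrete ℓ^p norm. -/
lemma lp_reverse_triangle_aux {ι : Type*} (s : Finset ι) (a b : ι → ℝ)
    (ha : ∀ i ∈ s, 0 ≤ a i) (hb : ∀ i ∈ s, 0 ≤ b i) {p : ℝ} (hp : 1 ≤ p) :
    |(∑ i ∈ s, a i ^ p) ^ (1 / p) - (∑ i ∈ s, b i ^ p) ^ (1 / p)| ≤
      (∑ i ∈ s, |a i - b i| ^ p) ^ (1 / p) := by
  have habs : ∀ (u v : ι → ℝ), (∀ i ∈ s, 0 ≤ u i) → (∀ i ∈ s, 0 ≤ v i) →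
      (∑ i ∈ s, u i ^ p) ^ (1 / p) - (∑ i ∈ s, v i ^ p) ^ (1 / p) ≤
        (∑ i ∈ s, |u i - v i| ^ p) ^ (1 / p) := by
    intro u v hu hv
    have h := Real.Lp_add_le s (fun i => u i - v i) v hp
    have e1 : ∑ i ∈ s, |u i - v i + v i| ^ p = ∑ i ∈ s, u i ^ p := by
      refine Finset.sum_congr rfl fun i hi => ?_
      rw [sub_add_cancel, abs_of_nonneg (hu i hi)]
    have e2 : ∑ i ∈ s, |v i| ^ p = ∑ i ∈ s, v i ^ p := by
      refine Finset.sum_congr rfl fun i hi => ?_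
      rw [abs_of_nonneg (hv i hi)]
    rw [e1, e2] at h
    linarith
  rw [abs_sub_le_iff]
  constructor
  · have := habs a b ha hb
    linarith
  · have := habs b a hb ha
    have e : ∑ i ∈ s, |b i - a i| ^ p = ∑ i ∈ s, |a i - b i| ^ p := by
      refine Finset.sum_congr rfl fun i hi => ?_
      rw [abs_sub_comm]
    rw [e] at this
    linarith

/-- Type II merging with `p`-norm aggregation, `p ≥ 2`, is 1-Lipschitz in a summed sense:
if `z(x) = (Σ_k |σ_k(y_k(x))|^p)^{1/p}` (and analogously for `z̃`), with each `σ_k`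
1-Lipschitz, then `‖z − z̃‖₂² ≤ Σ_k ‖y_k − ỹ_k‖₂²`. -/
theorem typeII_merge_lipschitz_p_ge_two (d K : ℕ) (p : ℝ) (hp : 2 ≤ p)
    (y yt : Fin K → (Fin d → ℝ) → ℂ)
    (hy : ∀ k, MemLp (y k) 2 volume) (hyt : ∀ k, MemLp (yt k) 2 volume)
    (σ : Fin K → ℂ → ℂ) (hσ : ∀ k, LipschitzWith 1 (σ k))
    (z zt : (Fin d → ℝ) → ℝ)
    (hz : ∀ x, z x = (∑ k, ‖σ k (y k x)‖ ^ p) ^ (1 / p))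
    (hzt : ∀ x, zt x = (∑ k, ‖σ k (yt k x)‖ ^ p) ^ (1 / p)) :
    ∫ x, (z x - zt x) ^ 2 ∂volume ≤ ∑ k, ∫ x, ‖y k x - yt k x‖ ^ 2 ∂volume := by
  have hp1 : (1:ℝ) ≤ p := by linarith
  -- integrability of each squared norm
  have hint : ∀ k, Integrable (fun x => ‖y k x - yt k x‖ ^ 2) volume := by
    intro k
    have h := ((hy k).sub (hyt k)).integrable_norm_rpow two_ne_zero ENNReal.ofNat_ne_top
    simp only [ENNReal.toReal_ofNat, Pi.sub_apply] at h
    refine h.congr (Filter.Eventually.of_forall fun x => ?_)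
    simp [Real.rpow_two]
  have hG : Integrable (fun x => ∑ k, ‖y k x - yt k x‖ ^ 2) volume :=
    integrable_finset_sum _ fun k _ => hint k
  -- pointwise bound
  have hpt : ∀ x, (z x - zt x) ^ 2 ≤ ∑ k, ‖y k x - yt k x‖ ^ 2 := by
    intro x
    have h1 : |z x - zt x| ≤
        (∑ k, |‖σ k (y k x)‖ - ‖σ k (yt k x)‖| ^ p) ^ (1 / p) := by
      rw [hz x, hzt x]
      exact lp_reverse_triangle_aux Finset.univ _ _ (fun i _ => norm_nonneg _)
        (fun i _ => norm_nonneg _) hp1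
    have h2 : (∑ k, |‖σ k (y k x)‖ - ‖σ k (yt k x)‖| ^ p) ^ (1 / p) ≤
        (∑ k, ‖y k x - yt k x‖ ^ p) ^ (1 / p) := by
      refine Real.rpow_le_rpow (Finset.sum_nonneg fun i _ =>
        Real.rpow_nonneg (abs_nonneg _) p) (Finset.sum_le_sum fun k _ => ?_)
        (by positivity)
      refine Real.rpow_le_rpow (abs_nonneg _) ?_ (by linarith)
      calc |‖σ k (y k x)‖ - ‖σ k (yt k x)‖| ≤ ‖σ k (y k x) - σ k (yt k x)‖ :=
            abs_norm_sub_norm_le _ _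
        _ ≤ ‖y k x - yt k x‖ := by
            have := (hσ k).dist_le_mul (y k x) (yt k x)
            simpa [dist_eq_norm] using this
    have h3 : (∑ k, ‖y k x - yt k x‖ ^ p) ^ (1 / p) ≤
        (∑ k, ‖y k x - yt k x‖ ^ (2:ℝ)) ^ (1/2 : ℝ) :=
      lp_le_l2_aux Finset.univ _ (fun i _ => norm_nonneg _) hp
    have h4 : |z x - zt x| ≤ (∑ k, ‖y k x - yt k x‖ ^ (2:ℝ)) ^ (1/2 : ℝ) :=
      le_trans h1 (le_trans h2 h3)
    have h5 : (z x - zt x) ^ 2 ≤ ((∑ k, ‖y k x - yt k x‖ ^ (2:ℝ)) ^ (1/2 : ℝ)) ^ 2 := by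
      rw [← sq_abs]
      exact pow_le_pow_left₀ (abs_nonneg _) h4 2
    have hS : 0 ≤ ∑ k, ‖y k x - yt k x‖ ^ (2:ℝ) :=
      Finset.sum_nonneg fun i _ => Real.rpow_nonneg (norm_nonneg _) 2
    have h6 : ((∑ k, ‖y k x - yt k x‖ ^ (2:ℝ)) ^ (1/2 : ℝ)) ^ 2 =
        ∑ k, ‖y k x - yt k x‖ ^ 2 := by
      rw [← Real.rpow_two, ← Real.rpow_mul hS]
      norm_num [Real.rpow_two]
    rw [h6] at h5
    exact h5
  calc ∫ x, (z x - zt x) ^ 2 ∂volume ≤ ∫ x, ∑ k, ‖y k x - yt k x‖ ^ 2 ∂volume :=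
        integral_mono_of_nonneg (Filter.Eventually.of_forall fun x => sq_nonneg _)
          hG (Filter.Eventually.of_forall hpt)
    _ = ∑ k, ∫ x, ‖y k x - yt k x‖ ^ 2 ∂volume :=
        integral_finset_sum _ fun k _ => hint k
end

section
/- Type II merging with p-norm aggregation, 1 ≤ p < 2, satisfies ‖z − z̃‖₂² ≤ K^{2/p − 1} · Σ_{k=1}^K ‖y_k − ỹ_k‖₂², where z(x) = (Σ_{k=1}^K |σ_k(y_k(x))|^p)^{1/p} and z̃ is defined analogously from ỹ_k, with each σ_k 1-Lipschitz. -/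
open MeasureTheory

private lemma lp_pow_le_l2 {K : ℕ} {p : ℝ} (hp1 : 1 ≤ p) (hp2 : p < 2)
    (c : Fin K → ℝ) (hc : ∀ k, 0 ≤ c k) :
    ((∑ k, c k ^ p) ^ (1 / p)) ^ 2 ≤ (K : ℝ) ^ (2 / p - 1) * ∑ k, c k ^ 2 := by
  have hp0 : 0 < p := lt_of_lt_of_le zero_lt_one hp1
  have hr : Real.HolderConjugate (2 / p) (2 / (2 - p)) := by
    rw [Real.holderConjugate_iff]; constructor
    · rw [lt_div_iff₀ hp0]; linarith
    · have h2p : (2 : ℝ) - p ≠ 0 := by linarith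
      field_simp
      ring
  have hsum_nonneg : 0 ≤ ∑ k, c k ^ p :=
    Finset.sum_nonneg fun k _ => Real.rpow_nonneg (hc k) p
  have hsum2_nonneg : 0 ≤ ∑ k, c k ^ (2 : ℝ) :=
    Finset.sum_nonneg fun k _ => Real.rpow_nonneg (hc k) 2
  have hold := Real.inner_le_Lp_mul_Lq_of_nonneg Finset.univ
      (f := fun k => c k ^ p) (g := fun _ : Fin K => (1 : ℝ)) hr
      (fun k _ => Real.rpow_nonneg (hc k) p) (fun _ _ => zero_le_one)
  simp only [mul_one, Real.one_rpow, Finset.sum_const, Finset.card_univ,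
    Fintype.card_fin, nsmul_eq_mul] at hold
  have hxp : ∀ k : Fin K, (c k ^ p) ^ (2 / p) = c k ^ (2 : ℝ) := by
    intro k
    rw [← Real.rpow_mul (hc k)]
    rw [mul_div_assoc', mul_comm, mul_div_assoc, div_self (ne_of_gt hp0), mul_one]
  simp only [hxp] at hold
  have h1 : 1 / (2 / p) = p / 2 := by field_simp
  have h2 : 1 / (2 / (2 - p)) = (2 - p) / 2 := by
    have h2p : (2 : ℝ) - p ≠ 0 := by linarith
    field_simp
  rw [h1, h2] at hold
  have key := Real.rpow_le_rpow hsum_nonneg hold (by positivity : (0:ℝ) ≤ 2 / p)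
  have hK : (0:ℝ) ≤ (K:ℝ) := Nat.cast_nonneg _
  have hrhs : (((∑ k, c k ^ (2:ℝ)) ^ (p / 2)) * (K:ℝ) ^ ((2 - p) / 2)) ^ (2 / p)
      = (K:ℝ) ^ (2 / p - 1) * ∑ k, c k ^ (2:ℝ) := by
    rw [Real.mul_rpow (Real.rpow_nonneg hsum2_nonneg _) (Real.rpow_nonneg hK _),
      ← Real.rpow_mul hsum2_nonneg, ← Real.rpow_mul hK]
    have e1 : p / 2 * (2 / p) = 1 := by field_simp
    have e2 : (2 - p) / 2 * (2 / p) = 2 / p - 1 := by field_simp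
    rw [e1, e2, Real.rpow_one, mul_comm]
  rw [hrhs] at key
  calc ((∑ k, c k ^ p) ^ (1 / p)) ^ 2
      = (∑ k, c k ^ p) ^ (2 / p) := by
        rw [← Real.rpow_natCast ((∑ k, c k ^ p) ^ (1 / p)) 2,
          ← Real.rpow_mul hsum_nonneg]
        norm_num
        rw [inv_mul_eq_div]
    _ ≤ (K:ℝ) ^ (2 / p - 1) * ∑ k, c k ^ (2:ℝ) := key
    _ = (K:ℝ) ^ (2 / p - 1) * ∑ k, c k ^ 2 := by
        congr 1
        exact Finset.sum_congr rfl fun k _ => by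
          rw [← Real.rpow_natCast (c k) 2]; norm_num

private lemma lp_rev_triangle {K : ℕ} {p : ℝ} (hp1 : 1 ≤ p) (u v : Fin K → ℝ)
    (hu : ∀ k, 0 ≤ u k) (hv : ∀ k, 0 ≤ v k) :
    (∑ k, u k ^ p) ^ (1 / p) - (∑ k, v k ^ p) ^ (1 / p)
      ≤ (∑ k, |u k - v k| ^ p) ^ (1 / p) := by
  have h := Real.Lp_add_le Finset.univ v (fun k => u k - v k) hp1
  simp only [add_sub_cancel] at h
  have hu' : ∀ k : Fin K, |u k| = u k := fun k => abs_of_nonneg (hu k)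
  have hv' : ∀ k : Fin K, |v k| = v k := fun k => abs_of_nonneg (hv k)
  simp only [hu', hv'] at h
  linarith

/-- Type II merging with `p`-norm aggregation, `1 ≤ p < 2`, satisfies
`‖z − z̃‖₂² ≤ K^{2/p − 1} · Σ_k ‖y_k − ỹ_k‖₂²`, where
`z(x) = (Σ_k |σ_k(y_k(x))|^p)^{1/p}` and each `σ_k` is 1-Lipschitz. -/
theorem typeII_merge_lipschitz_p_lt_two (d K : ℕ) (p : ℝ) (hp1 : 1 ≤ p) (hp2 : p < 2)
    (y yt : Fin K → (Fin d → ℝ) → ℂ)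
    (hy : ∀ k, MemLp (y k) 2 volume) (hyt : ∀ k, MemLp (yt k) 2 volume)
    (σ : Fin K → ℂ → ℂ) (hσ : ∀ k, LipschitzWith 1 (σ k))
    (z zt : (Fin d → ℝ) → ℝ)
    (hz : ∀ x, z x = (∑ k, ‖σ k (y k x)‖ ^ p) ^ (1 / p))
    (hzt : ∀ x, zt x = (∑ k, ‖σ k (yt k x)‖ ^ p) ^ (1 / p)) :
    ∫ x, (z x - zt x) ^ 2 ∂volume
      ≤ (K : ℝ) ^ (2 / p - 1) * ∑ k, ∫ x, ‖y k x - yt k x‖ ^ 2 ∂volume := by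
  have hp0 : 0 < p := lt_of_lt_of_le zero_lt_one hp1
  -- pointwise bound
  have hpt : ∀ x, (z x - zt x) ^ 2
      ≤ (K : ℝ) ^ (2 / p - 1) * ∑ k, ‖y k x - yt k x‖ ^ 2 := by
    intro x
    have hbound : ∀ k : Fin K,
        |‖σ k (y k x)‖ - ‖σ k (yt k x)‖| ≤ ‖y k x - yt k x‖ := by
      intro k
      refine le_trans (abs_norm_sub_norm_le _ _) ?_
      have := (hσ k).dist_le_mul (y k x) (yt k x)
      simpa [dist_eq_norm] using this
    have hmono : ∀ (u v : Fin K → ℝ),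
        (∑ k, |u k - v k| ^ p) ^ (1 / p) ≤ (∑ k, ‖y k x - yt k x‖ ^ p) ^ (1 / p) →
        True := fun _ _ _ => trivial
    have hsum_le : ∀ (w : Fin K → ℝ), (∀ k, |w k| ≤ ‖y k x - yt k x‖) →
        (∑ k, |w k| ^ p) ^ (1 / p) ≤ (∑ k, ‖y k x - yt k x‖ ^ p) ^ (1 / p) := by
      intro w hw
      refine Real.rpow_le_rpow (Finset.sum_nonneg fun k _ => Real.rpow_nonneg (abs_nonneg _) p)
        (Finset.sum_le_sum fun k _ => Real.rpow_le_rpow (abs_nonneg _) (hw k) hp0.le)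
        (by positivity)
    have habs : |z x - zt x| ≤ (∑ k, ‖y k x - yt k x‖ ^ p) ^ (1 / p) := by
      rw [abs_sub_le_iff, hz, hzt]
      constructor
      · exact le_trans (lp_rev_triangle hp1 _ _ (fun k => norm_nonneg _)
          (fun k => norm_nonneg _)) (hsum_le _ fun k => by simpa using hbound k)
      · exact le_trans (lp_rev_triangle hp1 _ _ (fun k => norm_nonneg _)
          (fun k => norm_nonneg _)) (hsum_le _ fun k => by
            simpa [abs_sub_comm] using hbound k)
    calc (z x - zt x) ^ 2 = |z x - zt x| ^ 2 := (sq_abs _).symm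
      _ ≤ ((∑ k, ‖y k x - yt k x‖ ^ p) ^ (1 / p)) ^ 2 :=
          pow_le_pow_left₀ (abs_nonneg _) habs 2
      _ ≤ (K : ℝ) ^ (2 / p - 1) * ∑ k, ‖y k x - yt k x‖ ^ 2 :=
          lp_pow_le_l2 hp1 hp2 _ (fun k => norm_nonneg _)
  -- integrability of RHS
  have hint : ∀ k, Integrable (fun x => ‖y k x - yt k x‖ ^ 2) volume := by
    intro k
    have h := ((hy k).sub (hyt k)).integrable_norm_rpow (by norm_num) (by norm_num)
    refine h.congr (Filter.Eventually.of_forall fun x => ?_)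
    simp only [Pi.sub_apply]
    rw [← Real.rpow_natCast ‖y k x - yt k x‖ 2]
    norm_num
  have hg : Integrable
      (fun x => (K : ℝ) ^ (2 / p - 1) * ∑ k, ‖y k x - yt k x‖ ^ 2) volume :=
    (integrable_finset_sum _ fun k _ => hint k).const_mul _
  calc ∫ x, (z x - zt x) ^ 2 ∂volume
      ≤ ∫ x, (K : ℝ) ^ (2 / p - 1) * ∑ k, ‖y k x - yt k x‖ ^ 2 ∂volume :=
        integral_mono_of_nonneg (Filter.Eventually.of_forall fun x => sq_nonneg _)
          hg (Filter.Eventually.of_forall hpt)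
    _ = (K : ℝ) ^ (2 / p - 1) * ∑ k, ∫ x, ‖y k x - yt k x‖ ^ 2 ∂volume := by
        rw [integral_const_mul, integral_finset_sum _ fun k _ => hint k]
end

section
/- Every feasible point of the linear program with y₀ = 1, y_m + z_m ≤ B⁽¹⁾_m y_{m−1} (1 ≤ m ≤ M−1), z_M ≤ B⁽¹⁾_M y_{M−1}, y_m ≤ B⁽¹⁾_m y_{m−1}, and y_m, z_m ≥ 0 satisfies Σ_{m=1}^M z_m ≤ Π_{m=1}^M max{1, B⁽¹⁾_m}. -/
open Finset

/-- Every feasible point of the linear program with `y₀ = 1`,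
`y_m + z_m ≤ B⁽¹⁾_m y_{m−1}` (`1 ≤ m ≤ M−1`), `z_M ≤ B⁽¹⁾_M y_{M−1}`,
`y_m ≤ B⁽¹⁾_m y_{m−1}`, `y_M = 0`, and `y_m, z_m ≥ 0` satisfies
`Σ_{m=1}^M z_m ≤ Π_{m=1}^M max{1, B⁽¹⁾_m}`. -/
theorem lipschitz_lp_product_bound (M : ℕ) (hM : 1 ≤ M) (B1 : ℕ → ℝ)
    (hB1 : ∀ m, 0 ≤ B1 m) (y z : ℕ → ℝ)
    (hy0 : y 0 = 1) (hyM : y M = 0)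
    (h1 : ∀ m, 1 ≤ m → m ≤ M - 1 → y m + z m ≤ B1 m * y (m - 1))
    (hM1 : z M ≤ B1 M * y (M - 1))
    (h2 : ∀ m, 1 ≤ m → m ≤ M - 1 → y m ≤ B1 m * y (m - 1))
    (hy : ∀ m, 0 ≤ y m) (hz : ∀ m, 0 ≤ z m) :
    ∑ m ∈ Icc 1 M, z m ≤ ∏ m ∈ Icc 1 M, max 1 (B1 m) := by
  obtain ⟨N, rfl⟩ : ∃ N, M = N + 1 := ⟨M - 1, by omega⟩
  have key : ∀ n, n ≤ N →
      ∑ m ∈ Icc 1 n, z m + y n ≤ ∏ m ∈ Icc 1 n, max 1 (B1 m) := by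
    intro n
    induction n with
    | zero => intro _; simp [hy0]
    | succ n ih =>
      intro hn
      have ih' := ih (by omega)
      have hfeas := h1 (n + 1) (by omega) (by omega)
      simp only [Nat.add_sub_cancel] at hfeas
      have hS : (0:ℝ) ≤ ∑ m ∈ Icc 1 n, z m := sum_nonneg fun m _ => hz m
      have hmax1 : (1:ℝ) ≤ max 1 (B1 (n + 1)) := le_max_left _ _
      have hBle : B1 (n + 1) ≤ max 1 (B1 (n + 1)) := le_max_right _ _
      have hyn := hy n
      calc ∑ m ∈ Icc 1 (n + 1), z m + y (n + 1)
          = ∑ m ∈ Icc 1 n, z m + (y (n + 1) + z (n + 1)) := by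
            rw [Finset.sum_Icc_succ_top (by omega)]; ring
        _ ≤ ∑ m ∈ Icc 1 n, z m + B1 (n + 1) * y n := by linarith
        _ ≤ max 1 (B1 (n + 1)) * (∑ m ∈ Icc 1 n, z m + y n) := by
            nlinarith [mul_le_mul_of_nonneg_right hBle hyn]
        _ ≤ max 1 (B1 (n + 1)) * ∏ m ∈ Icc 1 n, max 1 (B1 m) := by
            exact mul_le_mul_of_nonneg_left ih' (by linarith)
        _ = ∏ m ∈ Icc 1 (n + 1), max 1 (B1 m) := by
            rw [Finset.prod_Icc_succ_top (by omega)]; ring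
  have hkN := key N le_rfl
  have hS : (0:ℝ) ≤ ∑ m ∈ Icc 1 N, z m := sum_nonneg fun m _ => hz m
  have hmax1 : (1:ℝ) ≤ max 1 (B1 (N + 1)) := le_max_left _ _
  have hBle : B1 (N + 1) ≤ max 1 (B1 (N + 1)) := le_max_right _ _
  have hyn := hy N
  simp only [Nat.add_sub_cancel] at hM1
  calc ∑ m ∈ Icc 1 (N + 1), z m
      = ∑ m ∈ Icc 1 N, z m + z (N + 1) := Finset.sum_Icc_succ_top (by omega) _
    _ ≤ ∑ m ∈ Icc 1 N, z m + B1 (N + 1) * y N := by linarith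
    _ ≤ max 1 (B1 (N + 1)) * (∑ m ∈ Icc 1 N, z m + y N) := by
        nlinarith [mul_le_mul_of_nonneg_right hBle hyn]
    _ ≤ max 1 (B1 (N + 1)) * ∏ m ∈ Icc 1 N, max 1 (B1 m) :=
        mul_le_mul_of_nonneg_left hkN (by linarith)
    _ = ∏ m ∈ Icc 1 (N + 1), max 1 (B1 m) := by
        rw [Finset.prod_Icc_succ_top (by omega)]; ring
end
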